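/- If R is a coherent integral domain that is FGFC, and S is a finite R-algebra that is torsion-free as an R-module, then S is an FGFC ring. -/

import Mathlib

def IsFGFC (R : Type*) [CommRing R] : Prop :=
  ∀ I : Ideal R, I.FG → I.minimalPrimes.Finite

/-- A ring is coherent if every finitely generated ideal is finitely
presented as a module. -/
def IsCoherent (R : Type*) [CommRing R] : Prop :=
  ∀ I : Ideal R, I.FG → Module.FinitePresentation R I

section Aux

variable {R : Type*} [CommRing R]

/-- Over a coherent ring, the kernel of a linear map from a finite module to a
finite free module is finitely generated. -/
lemma ker_pi_fg (hcoh : IsCoherent R) :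
    ∀ (n : ℕ) (M : Type _) [AddCommGroup M] [Module R M] [Module.Finite R M]
      (g : M →ₗ[R] (Fin n → R)), (LinearMap.ker g).FG := by
  intro n
  induction n with
  | zero =>
    intro M _ _ _ g
    have : g = 0 := Subsingleton.elim _ _
    rw [this, LinearMap.ker_zero]
    exact Module.Finite.fg_top
  | succ n IH =>
    intro M _ _ _ g
    set h : M →ₗ[R] R := (LinearMap.proj (Fin.last n)).comp g with hh
    have hrange : (LinearMap.range h).FG := by
      rw [← Submodule.map_top]
      exact Submodule.FG.map _ Module.Finite.fg_top
    haveI : Module.FinitePresentation R (LinearMap.range h) := hcoh _ hrange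
    have hkerh : (LinearMap.ker h).FG := by
      have := Module.FinitePresentation.fg_ker h.rangeRestrict
        h.surjective_rangeRestrict
      rwa [LinearMap.ker_rangeRestrict] at this
    haveI : Module.Finite R (LinearMap.ker h) := Module.Finite.iff_fg.mpr hkerh
    set g' : (LinearMap.ker h) →ₗ[R] (Fin n → R) :=
      (LinearMap.funLeft R R Fin.castSucc).comp (g.comp (LinearMap.ker h).subtype) with hg'
    have hker' := IH (LinearMap.ker h) g'
    have : LinearMap.ker g = Submodule.map (LinearMap.ker h).subtype (LinearMap.ker g') := by
      ext x
      simp only [LinearMap.mem_ker, Submodule.mem_map, LinearMap.mem_ker,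
        Submodule.coe_subtype]
      constructor
      · intro hx
        have hxh : x ∈ LinearMap.ker h := by
          simp [hh, hx]
        refine ⟨⟨x, hxh⟩, ?_, rfl⟩
        ext i
        simp [hg', LinearMap.funLeft, hx]
      · rintro ⟨⟨y, hy⟩, hy', rfl⟩
        funext i
        induction i using Fin.lastCases with
        | last => simpa [hh] using hy
        | cast i =>
          have := congrFun hy' i
          simpa [hg', LinearMap.funLeft] using this
    rw [this]
    exact Submodule.FG.map _ hker'

/-- For `Q` a minimal prime over `J` and `y ∈ Q`, some `y ^ n * s ∈ J` with `s ∉ Q`. -/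
lemma minimal_prime_pow_mul_mem {S : Type*} [CommRing S] {J Q : Ideal S}
    (hQ : Q ∈ J.minimalPrimes) {y : S} (hy : y ∈ Q) :
    ∃ (n : ℕ) (s : S), s ∉ Q ∧ y ^ n * s ∈ J := by
  haveI hQpr : Q.IsPrime := hQ.1.1
  by_contra hcon
  push_neg at hcon
  set T : Submonoid S := Submonoid.powers y ⊔ Q.primeCompl with hT
  have hdisj : Disjoint (J : Set S) (T : Set S) := by
    rw [Set.disjoint_left]
    intro z hzJ hzT
    obtain ⟨u, ⟨n, rfl⟩, v, hv, rfl⟩ := Submonoid.mem_sup.mp hzT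
    exact hcon n v hv hzJ
  obtain ⟨P, hPpr, hJP, hPdisj⟩ := Ideal.exists_le_prime_disjoint J T hdisj
  have hPQ : P ≤ Q := by
    intro z hzP
    by_contra hzQ
    have hzT : z ∈ T := le_sup_right (a := Submonoid.powers y) hzQ
    exact Set.disjoint_left.mp hPdisj hzP hzT
  have hQP : Q ≤ P := hQ.2 ⟨hPpr, hJP⟩ hPQ
  have hyT : y ∈ T := le_sup_left (b := Q.primeCompl) ⟨1, pow_one y⟩
  exact Set.disjoint_left.mp hPdisj (hQP hy) hyT

variable (R) in
/-- The ideal generated by all `k × k` minors of a matrix. -/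
def minorsIdeal {t m : ℕ} (A : Matrix (Fin t) (Fin m) R) (k : ℕ) : Ideal R :=
  Ideal.span {x : R | ∃ (ρ : Fin k → Fin t) (ζ : Fin k → Fin m), x = (A.submatrix ρ ζ).det}

lemma minorsIdeal_fg {t m : ℕ} (A : Matrix (Fin t) (Fin m) R) (k : ℕ) :
    (minorsIdeal R A k).FG := by
  apply Submodule.fg_span
  have : {x : R | ∃ (ρ : Fin k → Fin t) (ζ : Fin k → Fin m), x = (A.submatrix ρ ζ).det} =
      Set.range (fun q : (Fin k → Fin t) × (Fin k → Fin m) => (A.submatrix q.1 q.2).det) := by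
    ext x
    constructor
    · rintro ⟨ρ, ζ, rfl⟩; exact ⟨⟨ρ, ζ⟩, rfl⟩
    · rintro ⟨⟨ρ, ζ⟩, rfl⟩; exact ⟨ρ, ζ, rfl⟩
  rw [this]
  exact Set.finite_range _

end Aux


/-- A finite torsion-free module over a domain embeds into a finite free module. -/
lemma exists_embedding_free {R S : Type*} [CommRing R] [IsDomain R] [AddCommGroup S]
    [Module R S] [Module.Finite R S] [NoZeroSMulDivisors R S] :
    ∃ (n : ℕ) (ψ : S →ₗ[R] (Fin n → R)), Function.Injective ψ := by
  classical
  obtain ⟨m, b, hb⟩ := Module.Finite.exists_fin (R := R) (M := S)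
  obtain ⟨I, hli, hmax⟩ := exists_maximal_linearIndepOn R b
  haveI : Fintype I := Fintype.ofFinite I
  set F : Submodule R S := Submodule.span R (Set.range (fun x : I => b x)) with hF
  have hbi : ∀ i : Fin m, ∃ a : R, a ≠ 0 ∧ a • b i ∈ F := by
    intro i
    by_cases h : i ∈ I
    · exact ⟨1, one_ne_zero, by
        rw [one_smul]; exact Submodule.subset_span ⟨⟨i, h⟩, rfl⟩⟩
    · obtain ⟨a, ha, haF⟩ := hmax i h
      refine ⟨a, ha, ?_⟩
      rwa [Set.image_eq_range] at haF
  choose aa ha0 haF using hbi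
  set rr : R := ∏ i, aa i with hrr
  have hrr0 : rr ≠ 0 := Finset.prod_ne_zero_iff.mpr fun i _ => ha0 i
  have hrS : ∀ x : S, rr • x ∈ F := by
    have hle : Submodule.span R (Set.range b) ≤ F.comap (LinearMap.lsmul R S rr) := by
      rw [Submodule.span_le]
      rintro _ ⟨i, rfl⟩
      show rr • b i ∈ F
      rw [hrr, ← Finset.prod_erase_mul Finset.univ aa (Finset.mem_univ i), mul_smul]
      exact F.smul_mem _ (haF i)
    intro x
    have hx : x ∈ Submodule.span R (Set.range b) := by rw [hb]; trivial
    exact hle hx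
  set ψ₀ : S →ₗ[R] F := LinearMap.codRestrict F (LinearMap.lsmul R S rr) hrS with hψ₀
  have hψ₀inj : Function.Injective ψ₀ := by
    intro x y hxy
    have : rr • x = rr • y := congrArg Subtype.val hxy
    exact smul_right_injective S hrr0 this
  set Bas : Module.Basis I R F := Module.Basis.span hli.linearIndependent
  refine ⟨Fintype.card I, ?_, ?_⟩
  · exact ((LinearEquiv.funCongrLeft R R (Fintype.equivFin I).symm).toLinearMap.comp
      ((Finsupp.linearEquivFunOnFinite R R I).toLinearMap.comp
        Bas.repr.toLinearMap)).comp ψ₀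
  · simp only [LinearMap.coe_comp, LinearEquiv.coe_coe]
    exact ((LinearEquiv.funCongrLeft R R (Fintype.equivFin I).symm).injective.comp
      ((Finsupp.linearEquivFunOnFinite R R I).injective.comp
        Bas.repr.injective)).comp hψ₀inj

section Core
variable {R : Type*} [CommRing R]

open Finset in
lemma contraction_mem_minors_minimalPrimes
    {S : Type*} [CommRing S] [Algebra R S]
    {J Q : Ideal S} (hQ : Q ∈ J.minimalPrimes)
    {m t : ℕ} (b : Fin m → S) (a : Fin t → (Fin m → R))
    (hspan : ∀ s : S, ∃ r : Fin m → R, Fintype.linearCombination R b r = s)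
    (hrel : ∀ w : Fin m → R, Fintype.linearCombination R b w ∈ J ↔
      w ∈ Submodule.span R (Set.range a)) :
    ∃ k ≤ m + 1, Q.comap (algebraMap R S) ∈ (minorsIdeal R (Matrix.of a) k).minimalPrimes := by
  classical
  haveI hQpr : Q.IsPrime := hQ.1.1
  set φ := Fintype.linearCombination R b with hφ
  set p : Ideal R := Q.comap (algebraMap R S) with hp
  haveI hppr : p.IsPrime := Ideal.IsPrime.comap _
  set A : Matrix (Fin t) (Fin m) R := Matrix.of a with hA
  set kset : Finset ℕ := (Finset.range (m + 1)).filter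
    (fun j => ¬ (minorsIdeal R A j ≤ p)) with hkset
  have h0 : 0 ∈ kset := by
    refine Finset.mem_filter.mpr ⟨Finset.mem_range.mpr (Nat.succ_pos m), ?_⟩
    intro hle
    have h1 : (1 : R) ∈ minorsIdeal R A 0 :=
      Ideal.subset_span ⟨Fin.elim0, Fin.elim0, Matrix.det_fin_zero.symm⟩
    exact hppr.ne_top ((Ideal.eq_top_iff_one p).mpr (hle h1))
  set k : ℕ := kset.max' ⟨0, h0⟩ with hk
  have hkmem : k ∈ kset := kset.max'_mem ⟨0, h0⟩
  have hkmem2 := Finset.mem_filter.mp hkmem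
  have hkm : k ≤ m := Nat.lt_succ_iff.mp (Finset.mem_range.mp hkmem2.1)
  have hknot : ¬ (minorsIdeal R A k ≤ p) := hkmem2.2
  have hk1 : minorsIdeal R A (k + 1) ≤ p := by
    by_cases hkm' : k = m
    · rw [minorsIdeal, Ideal.span_le]
      rintro x ⟨ρ, ζ, rfl⟩
      have hcard : Fintype.card (Fin m) < Fintype.card (Fin (k + 1)) := by
        simp [hkm']
      obtain ⟨i, i', hne, heq⟩ := Fintype.exists_ne_map_eq_of_card_lt ζ hcard
      have hz : (A.submatrix ρ ζ).det = 0 :=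
        Matrix.det_zero_of_column_eq hne fun l => by
          simp [Matrix.submatrix_apply, heq]
      rw [SetLike.mem_coe, hz]
      exact p.zero_mem
    · by_contra hcon
      have hmem : k + 1 ∈ kset := Finset.mem_filter.mpr
        ⟨Finset.mem_range.mpr (by omega), hcon⟩
      have := Finset.le_max' kset _ hmem
      omega
  obtain ⟨δx, hδmem, hδp⟩ := Set.not_subset.mp (mt Ideal.span_le.mpr hknot)
  obtain ⟨ρ, ζ, rfl⟩ := hδmem
  set M' : Matrix (Fin k) (Fin k) R := A.submatrix ρ ζ with hM'
  set δ : R := M'.det with hδ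
  refine ⟨k + 1, by omega, ⟨⟨hppr, hk1⟩, ?_⟩⟩
  rintro p' ⟨hp'pr, hDp'⟩ hp'p
  intro x hxp
  by_contra hxp'
  have hyQ : algebraMap R S x ∈ Q := hxp
  obtain ⟨n, s, hsQ, hys⟩ := minimal_prime_pow_mul_mem hQ hyQ
  obtain ⟨r, hr⟩ := hspan s
  set u : Fin k → (Fin m → R) := fun i => ∑ l, M'.adjugate i l • a (ρ l) with hu
  have huJ : ∀ i, φ (u i) ∈ J := by
    intro i
    rw [hrel]
    exact Submodule.sum_mem _ fun l _ =>
      Submodule.smul_mem _ _ (Submodule.subset_span ⟨ρ l, rfl⟩)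
  have hudiag : ∀ i i', u i (ζ i') = δ * (if i = i' then 1 else 0) := by
    intro i i'
    have h1 : u i (ζ i') = ∑ l, M'.adjugate i l * M' l i' := by
      simp only [hu, Finset.sum_apply, Pi.smul_apply, smul_eq_mul, hM',
        Matrix.submatrix_apply]
      rfl
    rw [h1, ← Matrix.mul_apply, Matrix.adjugate_mul]
    simp [Matrix.one_apply, hδ]
  set r' : Fin m → R := δ • r - ∑ i, r (ζ i) • u i with hr'
  have hr'ζ : ∀ i', r' (ζ i') = 0 := by
    intro i'
    simp only [hr', Pi.sub_apply, Pi.smul_apply, smul_eq_mul, Finset.sum_apply]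
    simp only [hudiag, mul_ite, mul_one, mul_zero]
    rw [Finset.sum_ite_eq' Finset.univ i' (fun i => r (ζ i) * δ)]
    simp [mul_comm]
  have hφr' : φ r' = δ • s - ∑ i, r (ζ i) • φ (u i) := by
    simp only [hr', map_sub, map_smul, map_sum, hr]
  set w : Fin m → R := x ^ n • r' with hw
  have hwJ : φ w ∈ J := by
    have h2 : φ w = δ • ((algebraMap R S x) ^ n * s) -
        x ^ n • (∑ i, r (ζ i) • φ (u i)) := by
      rw [hw, map_smul, hφr', smul_sub, smul_comm (x ^ n) δ]
      congr 2
      rw [Algebra.smul_def, map_pow]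
    rw [h2]
    refine Submodule.sub_mem _ ?_ ?_
    · exact Submodule.smul_of_tower_mem _ _ hys
    · exact Submodule.smul_of_tower_mem _ _
        (Submodule.sum_mem _ fun i _ => Submodule.smul_of_tower_mem _ _ (huJ i))
  obtain ⟨c, hc⟩ := (Submodule.mem_span_range_iff_exists_fun R).mp ((hrel w).mp hwJ)
  have hkey : ∀ j : Fin m, δ * w j ∈ p' := by
    intro j
    set ζ2 : Fin (k + 1) → Fin m := Fin.snoc ζ j with hζ2
    set M₀ : Matrix (Fin (k + 1)) (Fin (k + 1)) R :=
      Matrix.of (Fin.snoc (fun l i' => a (ρ l) (ζ2 i')) (fun _ => 0)) with hM₀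
    set L : (Fin (k + 1) → R) →ₗ[R] R :=
      { toFun := fun v => (M₀.updateRow (Fin.last k) v).det
        map_add' := fun v v' => Matrix.det_updateRow_add M₀ (Fin.last k) v v'
        map_smul' := fun cc v => Matrix.det_updateRow_smul M₀ (Fin.last k) cc v } with hL
    have hrowl : ∀ l : Fin t,
        M₀.updateRow (Fin.last k) (fun i' => a l (ζ2 i')) = A.submatrix (Fin.snoc ρ l) ζ2 := by
      intro l
      ext i i'
      induction i using Fin.lastCases with
      | last => simp [Matrix.updateRow_self, Fin.snoc_last, hA, Matrix.submatrix_apply]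
      | cast i0 =>
        rw [Matrix.updateRow_ne (Fin.castSucc_lt_last i0).ne]
        simp [hM₀, hA, Matrix.submatrix_apply, Fin.snoc_castSucc]
    have hLw1 : L (fun i' => w (ζ2 i')) = ∑ l, c l * (A.submatrix (Fin.snoc ρ l) ζ2).det := by
      have hwc : (fun i' => w (ζ2 i')) = ∑ l, c l • (fun i' => a l (ζ2 i')) := by
        funext i'
        rw [← hc]
        simp [Finset.sum_apply]
      rw [hwc, map_sum]
      refine Finset.sum_congr rfl fun l _ => ?_
      rw [map_smul, smul_eq_mul]
      congr 1
      show (M₀.updateRow (Fin.last k) (fun i' => a l (ζ2 i'))).det = _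
      rw [hrowl l]
    have hLw2 : L (fun i' => w (ζ2 i')) = w j * δ := by
      show (M₀.updateRow (Fin.last k) (fun i' => w (ζ2 i'))).det = w j * δ
      set G := M₀.updateRow (Fin.last k) (fun i' => w (ζ2 i')) with hG
      rw [Matrix.det_succ_row G (Fin.last k)]
      rw [Finset.sum_eq_single (Fin.last k)]
      · have hGll : G (Fin.last k) (Fin.last k) = w j := by
          simp [hG, Matrix.updateRow_self, hζ2, Fin.snoc_last]
        have hsub : G.submatrix (Fin.last k).succAbove (Fin.last k).succAbove = M' := by
          ext i i'
          rw [Fin.succAbove_last]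
          simp only [Matrix.submatrix_apply, hG]
          rw [Matrix.updateRow_ne (Fin.castSucc_lt_last i).ne]
          simp [hM₀, Fin.snoc_castSucc, hζ2, hM', hA, Matrix.submatrix_apply]
        rw [hGll, hsub, ← hδ]
        have hsign : ((-1 : R)) ^ ((Fin.last k : ℕ) + (Fin.last k : ℕ)) = 1 :=
          Even.neg_one_pow ⟨(Fin.last k : ℕ), rfl⟩
        rw [hsign, one_mul]
      · intro i' _ hne
        have hi0 : ∃ i0 : Fin k, i' = i0.castSucc := ⟨i'.castPred hne, by simp⟩
        obtain ⟨i0, rfl⟩ := hi0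
        have hG0 : G (Fin.last k) i0.castSucc = 0 := by
          have : w (ζ2 i0.castSucc) = 0 := by
            rw [hζ2]
            simp only [Fin.snoc_castSucc]
            rw [hw]
            simp [hr'ζ i0]
          simp [hG, Matrix.updateRow_self, this]
        rw [hG0, mul_zero, zero_mul]
      · intro h
        exact absurd (Finset.mem_univ _) h
    have hmem : w j * δ ∈ p' := by
      rw [← hLw2, hLw1]
      refine Ideal.sum_mem _ fun l _ => Ideal.mul_mem_left _ _ (hDp' ?_)
      exact Ideal.subset_span ⟨Fin.snoc ρ l, ζ2, rfl⟩
    rwa [mul_comm] at hmem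
  have hδp' : δ ∉ p' := fun h => hδp (hp'p h)
  have hxnp' : x ^ n ∉ p' := fun h => hxp' (hp'pr.mem_of_pow_mem n h)
  have hr'p' : ∀ j, r' j ∈ p' := by
    intro j
    have h1 := hkey j
    have h2 : w j ∈ p' := ((hp'pr.mem_or_mem h1).resolve_left hδp')
    have hwj : w j = x ^ n * r' j := by simp [hw]
    rw [hwj] at h2
    exact (hp'pr.mem_or_mem h2).resolve_left hxnp'
  have hφr'Q : φ r' ∈ Q := by
    rw [hφ, Fintype.linearCombination_apply]
    refine Submodule.sum_mem _ fun jj _ => ?_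
    rw [Algebra.smul_def]
    exact Q.mul_mem_right _ (hp'p (hr'p' jj))
  have hδs : δ • s ∈ Q := by
    have h2 : δ • s = φ r' + ∑ i, r (ζ i) • φ (u i) := by
      rw [hφr']; abel
    rw [h2]
    exact Submodule.add_mem _ hφr'Q
      (Submodule.sum_mem _ fun i _ => Submodule.smul_of_tower_mem _ _ (hQ.1.2 (huJ i)))
  rw [Algebra.smul_def] at hδs
  rcases hQpr.mem_or_mem hδs with h | h
  · exact hδp h
  · exact hsQ h

end Core


/-- A module-finite algebra has finite fibers on prime spectra. -/
lemma fiber_finite {R S : Type*} [CommRing R] [CommRing S] [Algebra R S] [Module.Finite R S]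
    (p : Ideal R) :
    {Q : Ideal S | Q.IsPrime ∧ Q.comap (algebraMap R S) = p}.Finite := by
  classical
  rcases Set.eq_empty_or_nonempty
    {Q : Ideal S | Q.IsPrime ∧ Q.comap (algebraMap R S) = p} with h | ⟨Q₀, hQ₀⟩
  · rw [h]; exact Set.finite_empty
  haveI hQ₀pr : Q₀.IsPrime := hQ₀.1
  haveI hppr : p.IsPrime := hQ₀.2 ▸ Ideal.IsPrime.comap _
  set f := algebraMap R S with hf
  set J₀ : Ideal S := p.map f with hJ₀
  set A := R ⧸ p with hA
  set D := S ⧸ J₀ with hD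
  haveI : Module.Finite R D :=
    Module.Finite.of_surjective (IsScalarTower.toAlgHom R S D).toLinearMap
      Ideal.Quotient.mk_surjective
  haveI : Module.Finite A D := Module.Finite.of_restrictScalars_finite R A D
  set K := FractionRing A with hK
  set T : Submonoid D := Algebra.algebraMapSubmonoid D (nonZeroDivisors A) with hT
  set L := Localization T with hL
  haveI : IsScalarTower A D L := IsScalarTower.of_algebraMap_eq' rfl
  letI : Algebra K L := localizationAlgebra (nonZeroDivisors A) D
  haveI : IsScalarTower A K L := IsScalarTower.of_algebraMap_eq' (by
    have hmc := IsLocalization.map_comp (M := nonZeroDivisors A) (S := K)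
      (g := algebraMap A D) (T := T) (Q := L)
      ((nonZeroDivisors A).le_comap_map)
    exact (rfl : algebraMap A L = (algebraMap D L).comp (algebraMap A D)).trans hmc.symm)
  haveI : Module.Finite K L :=
    Module.Finite.of_isLocalization A D (nonZeroDivisors A)
  haveI : IsArtinianRing L := IsArtinianRing.of_finite K L
  have hfin : {I : Ideal L | I.IsPrime}.Finite := IsArtinianRing.setOfPred_isPrime_finite L
  set Θ : Ideal S → Ideal L := fun Q => (Q.map (Ideal.Quotient.mk J₀)).map (algebraMap D L)
    with hΘ
  have hstep : ∀ Q : Ideal S, Q.IsPrime → Q.comap f = p →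
      (Q.map (Ideal.Quotient.mk J₀)).IsPrime ∧
      ((Q.map (Ideal.Quotient.mk J₀)).comap (Ideal.Quotient.mk J₀) = Q) ∧
      Disjoint (T : Set D) ((Q.map (Ideal.Quotient.mk J₀)) : Set D) := by
    intro Q hQpr hQp
    have hJ₀Q : J₀ ≤ Q := Ideal.map_le_iff_le_comap.mpr (le_of_eq hQp.symm)
    have hker : RingHom.ker (Ideal.Quotient.mk J₀) ≤ Q := by
      rw [Ideal.mk_ker]; exact hJ₀Q
    haveI : Q.IsPrime := hQpr
    have h1 : (Q.map (Ideal.Quotient.mk J₀)).IsPrime :=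
      Ideal.map_isPrime_of_surjective Ideal.Quotient.mk_surjective hker
    have h2 : (Q.map (Ideal.Quotient.mk J₀)).comap (Ideal.Quotient.mk J₀) = Q := by
      rw [Ideal.comap_map_of_surjective _ Ideal.Quotient.mk_surjective]
      refine sup_eq_left.mpr ?_
      rw [← RingHom.ker_eq_comap_bot, Ideal.mk_ker]
      exact hJ₀Q
    refine ⟨h1, h2, Set.disjoint_left.mpr ?_⟩
    rintro z ⟨abar, habar, rfl⟩ hzQ
    obtain ⟨aa, rfl⟩ := Ideal.Quotient.mk_surjective abar
    rw [Ideal.Quotient.algebraMap_quotient_map_quotient] at hzQ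
    have : f aa ∈ Q := by
      rw [← h2]; exact hzQ
    have : aa ∈ p := by rw [← hQp]; exact this
    have h0 : (Ideal.Quotient.mk p aa) = 0 := Ideal.Quotient.eq_zero_iff_mem.mpr this
    rw [h0] at habar
    exact zero_notMem_nonZeroDivisors habar
  apply Set.Finite.of_finite_image (f := Θ) ?_ ?_
  · refine hfin.subset ?_
    rintro _ ⟨Q, ⟨hQpr, hQp⟩, rfl⟩
    obtain ⟨h1, _, h3⟩ := hstep Q hQpr hQp
    exact IsLocalization.isPrime_of_isPrime_disjoint T L _ h1 h3
  · rintro Q ⟨hQpr, hQp⟩ Q' ⟨hQ'pr, hQ'p⟩ hΘeq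
    obtain ⟨h1, h2, h3⟩ := hstep Q hQpr hQp
    obtain ⟨h1', h2', h3'⟩ := hstep Q' hQ'pr hQ'p
    have e1 : Q.map (Ideal.Quotient.mk J₀) = Q'.map (Ideal.Quotient.mk J₀) := by
      have := congrArg (Ideal.comap (algebraMap D L)) hΘeq
      exact (IsLocalization.comap_map_of_isPrime_disjoint T L h1 h3).symm.trans
        (this.trans (IsLocalization.comap_map_of_isPrime_disjoint T L h1' h3'))
    rw [← h2, ← h2', e1]

theorem stmt_15 {R S : Type*} [CommRing R] [IsDomain R] [CommRing S] [Algebra R S]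
    (hcoh : IsCoherent R) (hR : IsFGFC R) [Module.Finite R S]
    [NoZeroSMulDivisors R S] : IsFGFC S := by
  intro J hJ
  classical
  obtain ⟨m, b, hb⟩ := Module.Finite.exists_fin (R := R) (M := S)
  obtain ⟨nn, ψ, hψ⟩ := exists_embedding_free (R := R) (S := S)
  set φ : (Fin m → R) →ₗ[R] S := Fintype.linearCombination R b with hφ
  have hφsurj : Function.Surjective φ := by
    rw [← LinearMap.range_eq_top, hφ, Fintype.range_linearCombination, hb]
  set N : Submodule R (Fin m → R) := (J.restrictScalars R).comap φ with hN
  have hkerφ : (LinearMap.ker φ).FG := by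
    have h1 : LinearMap.ker (ψ.comp φ) = LinearMap.ker φ := by
      rw [LinearMap.ker_comp, LinearMap.ker_eq_bot.mpr hψ, Submodule.comap_bot]
    rw [← h1]
    exact ker_pi_fg hcoh nn _ (ψ.comp φ)
  have hJR : (J.restrictScalars R).FG := by
    haveI : Module.Finite S J := Module.Finite.iff_fg.mpr hJ
    haveI : Module.Finite R J := Module.Finite.trans S J
    exact Module.Finite.iff_fg.mp ‹Module.Finite R (J.restrictScalars R)›
  have hNfg : N.FG := by
    apply Submodule.fg_of_fg_map_of_fg_inf_ker φ
    · have : Submodule.map φ N = J.restrictScalars R := by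
        rw [hN, Submodule.map_comap_eq, LinearMap.range_eq_top.mpr hφsurj, top_inf_eq]
      rw [this]
      exact hJR
    · have : N ⊓ LinearMap.ker φ = LinearMap.ker φ := by
        rw [inf_eq_right]
        intro x hx
        simp only [hN, Submodule.mem_comap, Submodule.restrictScalars_mem]
        rw [LinearMap.mem_ker.mp hx]
        exact J.zero_mem
      rw [this]
      exact hkerφ
  obtain ⟨t, a, ha⟩ := Submodule.fg_iff_exists_fin_generating_family.mp hNfg
  have hrel : ∀ w : Fin m → R, φ w ∈ J ↔ w ∈ Submodule.span R (Set.range a) := by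
    intro w
    rw [ha, hN]
    exact Iff.rfl
  set P : Set (Ideal R) :=
    ⋃ k ∈ Finset.range (m + 2), (minorsIdeal R (Matrix.of a) k).minimalPrimes with hP
  have hPfin : P.Finite :=
    Set.Finite.biUnion (Finset.range (m + 2)).finite_toSet
      (fun k _ => hR _ (minorsIdeal_fg _ k))
  have hsub : J.minimalPrimes ⊆
      ⋃ p ∈ P, {Q : Ideal S | Q.IsPrime ∧ Q.comap (algebraMap R S) = p} := by
    intro Q hQ
    obtain ⟨k, hk, hmem⟩ := contraction_mem_minors_minimalPrimes hQ b a
      (fun s => hφsurj s) hrel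
    have hpP : Q.comap (algebraMap R S) ∈ P := by
      rw [hP]
      exact Set.mem_biUnion (Finset.mem_coe.mpr (Finset.mem_range.mpr (by omega))) hmem
    exact Set.mem_biUnion hpP ⟨hQ.1.1, rfl⟩
  exact (Set.Finite.biUnion hPfin (fun p _ => fiber_finite p)).subset hsub
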